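/- Let (A, Con, ⊢, Δ) be an information system with witnesses. Then the poset of states (|A|, ⊆) is an L-domain: it is a pointed continuous dcpo (with basis {[X]_i : (i,X) ∈ Con}) in which every pair of states bounded above by z has a least upper bound among the states contained in z. -/
import Mathlib


variable {A : Type*}

/-- An information system with witnesses `(A, Con, ⊢, Δ)`. -/
structure IsISW (Δ : A) (Con : A → Finset A → Prop)
    (ent : A → Finset A → A → Prop) : Prop where
  dom : ∀ i X a, ent i X a → Con i X
  ax1 : ∀ i, Con i {i}
  ax2 : ∀ i (X Y : Finset A), Y ⊆ X → Con i X → Con i Y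
  ax3 : ∀ i, ent i ∅ Δ
  ax4 : ∀ i (X Y : Finset A), Con i X → (∀ b ∈ Y, ent i X b) → Con i Y
  ax5 : ∀ i (X Y : Finset A) (a : A), Con i X → Con i Y → X ⊆ Y → ent i X a → ent i Y a
  ax6 : ∀ i (X Y : Finset A) (a : A), Con i X → (∀ b ∈ Y, ent i X b) → ent i Y a → ent i X a
  ax7 : ∀ i j : A, Con j {i} → ∀ X, Con i X → Con j X
  ax8 : ∀ (i j : A) (X : Finset A) (a : A), Con j {i} → Con i X → ent i X a → ent j X a
  ax9 : ∀ (i j : A) (X : Finset A) (a : A), Con j {i} → Con i X → ent j X a → ent i X a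
  ax10 : ∀ i (X Y : Finset A), Con i X → (∀ b ∈ Y, ent i X b) →
      ∃ e Z, Con e Z ∧ ent i X e ∧ (∀ b ∈ Z, ent i X b) ∧ (∀ b ∈ Y, ent e Z b)

/-- A state of an information system with witnesses: finitely consistent with a
witness in the state (ST1), entailment-closed (ST2), every element derivable (ST3). -/
def IsState (Con : A → Finset A → Prop) (ent : A → Finset A → A → Prop)
    (x : Set A) : Prop :=
  (∀ F : Finset A, ↑F ⊆ x → ∃ i ∈ x, Con i F) ∧
  (∀ i ∈ x, ∀ X : Finset A, ↑X ⊆ x → Con i X → ∀ a, ent i X a → a ∈ x) ∧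
  (∀ a ∈ x, ∃ i ∈ x, ∃ X : Finset A, ↑X ⊆ x ∧ Con i X ∧ ent i X a)

/-- The way-below relation on the poset of states ordered by inclusion. -/
def WayBelowSt (Con : A → Finset A → Prop) (ent : A → Finset A → A → Prop)
    (x y : Set A) : Prop :=
  ∀ 𝒮 : Set (Set A), (∀ s ∈ 𝒮, IsState Con ent s) → 𝒮.Nonempty →
    DirectedOn (· ⊆ ·) 𝒮 → y ⊆ ⋃₀ 𝒮 → ∃ s ∈ 𝒮, x ⊆ s

section Aux

variable {Δ : A} {Con : A → Finset A → Prop} {ent : A → Finset A → A → Prop}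

lemma con_empty (h : IsISW Δ Con ent) (i : A) : Con i ∅ :=
  h.ax2 i {i} ∅ (Finset.empty_subset _) (h.ax1 i)

lemma principal_isState (h : IsISW Δ Con ent) {i : A} {X : Finset A} (hC : Con i X) :
    IsState Con ent {a : A | ent i X a} := by
  refine ⟨?_, ?_, ?_⟩
  · intro F hF
    obtain ⟨e, Z, hCeZ, hie, hZ, hF'⟩ :=
      h.ax10 i X F hC (fun b hb => hF (Finset.mem_coe.mpr hb))
    exact ⟨e, hie, h.ax4 e Z F hCeZ hF'⟩
  · intro j hj Y hY hCjY a ha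
    have hCij : Con i {j} := h.ax4 i X {j} hC (by simpa using hj)
    have h1 : ent i Y a := h.ax8 j i Y a hCij hCjY ha
    exact h.ax6 i X Y a hC (fun b hb => hY (Finset.mem_coe.mpr hb)) h1
  · intro a ha
    obtain ⟨e, Z, hCeZ, hie, hZ, hFa⟩ := h.ax10 i X {a} hC (by simpa using ha)
    exact ⟨e, hie, Z, fun b hb => hZ b (Finset.mem_coe.mp hb), hCeZ,
      hFa a (Finset.mem_singleton_self a)⟩

lemma directed_finset_subset {𝒮 : Set (Set A)} (hne : 𝒮.Nonempty)
    (hdir : DirectedOn (· ⊆ ·) 𝒮) (F : Finset A) (hF : ↑F ⊆ ⋃₀ 𝒮) :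
    ∃ s ∈ 𝒮, ↑F ⊆ s := by
  classical
  induction F using Finset.induction_on with
  | empty => obtain ⟨s, hs⟩ := hne; exact ⟨s, hs, by simp⟩
  | @insert a F ha ih =>
    obtain ⟨s, hs, hFs⟩ := ih (fun b hb => hF (by simp [Finset.mem_coe.mp hb]))
    obtain ⟨t, ht, hat⟩ := hF (show a ∈ ↑(insert a F) by simp)
    obtain ⟨u, hu, hsu, htu⟩ := hdir s hs t ht
    refine ⟨u, hu, ?_⟩
    simp only [Finset.coe_insert, Set.insert_subset_iff]
    exact ⟨htu hat, hFs.trans hsu⟩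

lemma ent_transfer (h : IsISW Δ Con ent) {z : Set A} (hz : IsState Con ent z)
    {i j : A} (hi : i ∈ z) (hj : j ∈ z) {X : Finset A}
    (hCi : Con i X) (hCj : Con j X) {a : A} (ha : ent i X a) : ent j X a := by
  classical
  obtain ⟨k, hk, hCk⟩ := hz.1 {i, j} (by
    intro b hb
    simp only [Finset.coe_insert, Finset.coe_singleton, Set.mem_insert_iff,
      Set.mem_singleton_iff] at hb
    rcases hb with rfl | rfl <;> assumption)
  have hki : Con k {i} := h.ax2 k {i, j} {i} (Finset.singleton_subset_iff.mpr (by simp)) hCk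
  have hkj : Con k {j} := h.ax2 k {i, j} {j} (Finset.singleton_subset_iff.mpr (by simp)) hCk
  have h1 : ent k X a := h.ax8 i k X a hki hCi ha
  exact h.ax9 j k X a hkj hCj h1

lemma sUnion_isState (h : IsISW Δ Con ent) {𝒮 : Set (Set A)}
    (hS : ∀ s ∈ 𝒮, IsState Con ent s) (hne : 𝒮.Nonempty)
    (hdir : DirectedOn (· ⊆ ·) 𝒮) : IsState Con ent (⋃₀ 𝒮) := by
  refine ⟨?_, ?_, ?_⟩
  · intro F hF
    obtain ⟨s, hs, hFs⟩ := directed_finset_subset hne hdir F hF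
    obtain ⟨i, hi, hCi⟩ := (hS s hs).1 F hFs
    exact ⟨i, Set.mem_sUnion.mpr ⟨s, hs, hi⟩, hCi⟩
  · intro i hi X hX hCi a ha
    obtain ⟨s, hs, his⟩ := hi
    obtain ⟨t, ht, hXt⟩ := directed_finset_subset hne hdir X hX
    obtain ⟨u, hu, hsu, htu⟩ := hdir s hs t ht
    exact Set.mem_sUnion.mpr ⟨u, hu, (hS u hu).2.1 i (hsu his) X (hXt.trans htu) hCi a ha⟩
  · intro a ha
    obtain ⟨s, hs, has⟩ := ha
    obtain ⟨i, hi, X, hX, hCi, he⟩ := (hS s hs).2.2 a has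
    exact ⟨i, ⟨s, hs, hi⟩, X, hX.trans (Set.subset_sUnion_of_mem hs), hCi, he⟩

lemma key_combine (h : IsISW Δ Con ent) {x y z : Set A} (hz : IsState Con ent z)
    (hxz : x ⊆ z) (hyz : y ⊆ z) (F : Finset A)
    (hF : ∀ a ∈ F, ∃ i ∈ z, ∃ X : Finset A, ↑X ⊆ x ∪ y ∧ Con i X ∧ ent i X a) :
    ∃ m ∈ z, ∃ W : Finset A, ↑W ⊆ x ∪ y ∧ Con m W ∧ ∀ a ∈ F, ent m W a := by
  classical
  have step1 : ∀ G : Finset A,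
      (∀ a ∈ G, ∃ i ∈ z, ∃ X : Finset A, ↑X ⊆ x ∪ y ∧ Con i X ∧ ent i X a) →
      ∃ W : Finset A, ↑W ⊆ x ∪ y ∧
        ∀ a ∈ G, ∃ i ∈ z, ∃ X : Finset A, X ⊆ W ∧ Con i X ∧ ent i X a := by
    intro G
    induction G using Finset.induction_on with
    | empty => intro _; exact ⟨∅, by simp, by simp⟩
    | @insert a G ha ih =>
      intro hG
      obtain ⟨W, hW, hWp⟩ := ih (fun b hb => hG b (Finset.mem_insert_of_mem hb))
      obtain ⟨i, hi, X, hX, hCi, he⟩ := hG a (Finset.mem_insert_self a G)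
      refine ⟨X ∪ W, ?_, ?_⟩
      · intro b hb
        rcases Finset.mem_union.mp (Finset.mem_coe.mp hb) with hb | hb
        · exact hX (Finset.mem_coe.mpr hb)
        · exact hW (Finset.mem_coe.mpr hb)
      · intro b hb
        rcases Finset.mem_insert.mp hb with rfl | hb
        · exact ⟨i, hi, X, Finset.subset_union_left, hCi, he⟩
        · obtain ⟨j, hj, X', hX', hC', he'⟩ := hWp b hb
          exact ⟨j, hj, X', hX'.trans Finset.subset_union_right, hC', he'⟩
  obtain ⟨W, hW, hWp⟩ := step1 F hF
  have hWz : ↑W ⊆ z := hW.trans (Set.union_subset hxz hyz)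
  obtain ⟨m, hm, hCm⟩ := hz.1 W hWz
  refine ⟨m, hm, W, hW, hCm, ?_⟩
  intro a haF
  obtain ⟨i, hi, X, hXW, hCi, he⟩ := hWp a haF
  have hCmX : Con m X := h.ax2 m W X hXW hCm
  have h1 : ent m X a := ent_transfer h hz hi hm hCi hCmX he
  exact h.ax5 m X W a hCmX hCm hXW h1

end Aux

theorem stmt12 {Δ : A} {Con : A → Finset A → Prop} {ent : A → Finset A → A → Prop}
    (h : IsISW Δ Con ent) :
    -- pointed
    (∃ b : Set A, IsState Con ent b ∧ ∀ x : Set A, IsState Con ent x → b ⊆ x) ∧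
    -- directed-complete (suprema are unions)
    (∀ 𝒮 : Set (Set A), (∀ s ∈ 𝒮, IsState Con ent s) → 𝒮.Nonempty →
      DirectedOn (· ⊆ ·) 𝒮 → IsState Con ent (⋃₀ 𝒮) ∧
        (∀ s ∈ 𝒮, s ⊆ ⋃₀ 𝒮) ∧
        ∀ w : Set A, IsState Con ent w → (∀ s ∈ 𝒮, s ⊆ w) → ⋃₀ 𝒮 ⊆ w) ∧
    -- continuity with basis {[X]_i : (i,X) ∈ Con}
    (∀ z : Set A, IsState Con ent z →
      ∃ 𝒮 : Set (Set A),
        (∀ s ∈ 𝒮, (∃ (i : A) (X : Finset A), Con i X ∧ s = {a : A | ent i X a}) ∧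
          WayBelowSt Con ent s z) ∧
        𝒮.Nonempty ∧ DirectedOn (· ⊆ ·) 𝒮 ∧ ⋃₀ 𝒮 = z) ∧
    -- local least upper bounds (the L-property)
    (∀ x y z : Set A, IsState Con ent x → IsState Con ent y → IsState Con ent z →
      x ⊆ z → y ⊆ z →
      ∃ s : Set A, IsState Con ent s ∧ s ⊆ z ∧ x ⊆ s ∧ y ⊆ s ∧
        ∀ w : Set A, IsState Con ent w → w ⊆ z → x ⊆ w → y ⊆ w → s ⊆ w) := by
  classical
  refine ⟨?_, ?_, ?_, ?_⟩
  · -- pointed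
    have hC : Con Δ ∅ := con_empty h Δ
    refine ⟨{a | ent Δ ∅ a}, principal_isState h hC, ?_⟩
    intro x hx a ha
    obtain ⟨i, hi, hCi⟩ := hx.1 ∅ (by simp)
    have hΔ : Δ ∈ x := hx.2.1 i hi ∅ (by simp) hCi Δ (h.ax3 i)
    exact hx.2.1 Δ hΔ ∅ (by simp) hC a ha
  · -- dcpo
    intro 𝒮 hS hne hdir
    exact ⟨sUnion_isState h hS hne hdir, fun s hs => Set.subset_sUnion_of_mem hs,
      fun w hw hsw => Set.sUnion_subset hsw⟩
  · -- continuity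
    intro z hz
    refine ⟨{s | ∃ i ∈ z, ∃ X : Finset A, ↑X ⊆ z ∧ Con i X ∧ s = {a : A | ent i X a}},
      ?_, ?_, ?_, ?_⟩
    · rintro s ⟨i, hi, X, hXz, hCi, rfl⟩
      refine ⟨⟨i, X, hCi, rfl⟩, ?_⟩
      intro 𝒯 h𝒯 hne hdir hcov
      obtain ⟨t, ht, hFt⟩ := directed_finset_subset hne hdir (insert i X) (by
        intro b hb
        apply hcov
        simp only [Finset.coe_insert, Set.mem_insert_iff, Finset.mem_coe] at hb
        rcases hb with rfl | hb
        · exact hi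
        · exact hXz (Finset.mem_coe.mpr hb))
      refine ⟨t, ht, ?_⟩
      intro a ha
      exact (h𝒯 t ht).2.1 i (hFt (by simp)) X
        (fun b hb => hFt (by simp [Finset.mem_coe.mp hb])) hCi a ha
    · obtain ⟨i, hi, hCi⟩ := hz.1 ∅ (by simp)
      exact ⟨{a | ent i ∅ a}, i, hi, ∅, by simp, hCi, rfl⟩
    · rintro s1 ⟨i, hi, X, hXz, hCi, rfl⟩ s2 ⟨j, hj, Y, hYz, hCj, rfl⟩
      have hFz : ↑(insert i (insert j (X ∪ Y)) : Finset A) ⊆ z := by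
        intro b hb
        simp only [Finset.coe_insert, Set.mem_insert_iff, Finset.mem_coe,
          Finset.mem_union] at hb
        rcases hb with rfl | rfl | hb | hb
        · exact hi
        · exact hj
        · exact hXz (Finset.mem_coe.mpr hb)
        · exact hYz (Finset.mem_coe.mpr hb)
      obtain ⟨k, hk, hCk⟩ := hz.1 (insert i (insert j (X ∪ Y))) hFz
      have hXF : X ⊆ insert i (insert j (X ∪ Y)) := fun b hb => by simp [hb]
      have hYF : Y ⊆ insert i (insert j (X ∪ Y)) := fun b hb => by simp [hb]
      refine ⟨{a | ent k (insert i (insert j (X ∪ Y))) a},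
        ⟨k, hk, _, hFz, hCk, rfl⟩, ?_, ?_⟩
      · intro a ha
        have hki : Con k {i} := h.ax2 k _ {i}
          (Finset.singleton_subset_iff.mpr (by simp)) hCk
        have h1 : ent k X a := h.ax8 i k X a hki hCi ha
        exact h.ax5 k X _ a (h.ax2 k _ X hXF hCk) hCk hXF h1
      · intro a ha
        have hkj : Con k {j} := h.ax2 k _ {j}
          (Finset.singleton_subset_iff.mpr (by simp)) hCk
        have h1 : ent k Y a := h.ax8 j k Y a hkj hCj ha
        exact h.ax5 k Y _ a (h.ax2 k _ Y hYF hCk) hCk hYF h1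
    · apply Set.Subset.antisymm
      · rintro a ⟨s, ⟨i, hi, X, hXz, hCi, rfl⟩, ha⟩
        exact hz.2.1 i hi X hXz hCi a ha
      · intro a ha
        obtain ⟨i, hi, X, hX, hCi, he⟩ := hz.2.2 a ha
        exact ⟨{b | ent i X b}, ⟨i, hi, X, hX, hCi, rfl⟩, he⟩
  · -- L-property
    intro x y z hx hy hz hxz hyz
    refine ⟨{a | ∃ i ∈ z, ∃ X : Finset A, ↑X ⊆ x ∪ y ∧ Con i X ∧ ent i X a},
      ?_, ?_, ?_, ?_, ?_⟩
    · refine ⟨?_, ?_, ?_⟩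
      · intro F hF
        obtain ⟨m, hm, W, hW, hCm, hall⟩ := key_combine h hz hxz hyz F
          (fun a ha => hF (Finset.mem_coe.mpr ha))
        obtain ⟨e, Z, hCeZ, hme, hZ, hFe⟩ := h.ax10 m W F hCm hall
        exact ⟨e, ⟨m, hm, W, hW, hCm, hme⟩, h.ax4 e Z F hCeZ hFe⟩
      · intro i hi X hX hCi a ha
        have certs : ∀ b ∈ insert i X,
            ∃ m ∈ z, ∃ Y : Finset A, ↑Y ⊆ x ∪ y ∧ Con m Y ∧ ent m Y b := by
          intro b hb
          rcases Finset.mem_insert.mp hb with rfl | hb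
          · exact hi
          · exact hX (Finset.mem_coe.mpr hb)
        obtain ⟨m, hm, W, hW, hCm, hall⟩ := key_combine h hz hxz hyz (insert i X) certs
        have hmi : ent m W i := hall i (Finset.mem_insert_self i X)
        have hCmi : Con m {i} := h.ax4 m W {i} hCm (by simpa using hmi)
        have h1 : ent m X a := h.ax8 i m X a hCmi hCi ha
        have h2 : ent m W a := h.ax6 m W X a hCm
          (fun b hb => hall b (Finset.mem_insert_of_mem hb)) h1
        exact ⟨m, hm, W, hW, hCm, h2⟩
      · intro a ha
        obtain ⟨i, hi, X, hX, hCi, he⟩ := ha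
        obtain ⟨e, Z, hCeZ, hie, hZ, hea⟩ := h.ax10 i X {a} hCi (by simpa using he)
        refine ⟨e, ⟨i, hi, X, hX, hCi, hie⟩, Z, ?_, hCeZ, hea a (Finset.mem_singleton_self a)⟩
        intro b hb
        exact ⟨i, hi, X, hX, hCi, hZ b (Finset.mem_coe.mp hb)⟩
    · rintro a ⟨i, hi, X, hX, hCi, he⟩
      exact hz.2.1 i hi X (hX.trans (Set.union_subset hxz hyz)) hCi a he
    · intro a ha
      obtain ⟨i, hi, X, hX, hCi, he⟩ := hx.2.2 a ha
      exact ⟨i, hxz hi, X, hX.trans Set.subset_union_left, hCi, he⟩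
    · intro a ha
      obtain ⟨i, hi, X, hX, hCi, he⟩ := hy.2.2 a ha
      exact ⟨i, hyz hi, X, hX.trans Set.subset_union_right, hCi, he⟩
    · intro w hw hwz hxw hyw
      rintro a ⟨i, hi, X, hX, hCi, he⟩
      have hXw : ↑X ⊆ w := hX.trans (Set.union_subset hxw hyw)
      obtain ⟨j, hj, hCj⟩ := hw.1 X hXw
      have h1 : ent j X a := ent_transfer h hz hi (hwz hj) hCi hCj he
      exact hw.2.1 j hj X hXw hCj a h1
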